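/- Let G be a connected interval graph with an interval model, r ≥ 1, and A a k-element set of vertices. Then the number of distinct r-profiles with respect to A is at most (k·(2r+4)+1)·(2k+1) + k, i.e., pc_r(G,A) ≤ 4k^2r + 8k^2 + 2kr + 7k + 1; in particular pc_r(G,k) ∈ O(k^2 r). -/

import Mathlib

open SimpleGraph

noncomputable def rProfile {V : Type*} (G : SimpleGraph V) (r : ℕ) (A : Set V) (v : V) :
    A → ℕ∞ :=
  fun a => if G.edist v a ≤ r then G.edist v a else ⊤

noncomputable def profCount {V : Type*} (G : SimpleGraph V) (r : ℕ) (A : Set V) : ℕ :=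
  ({p | ∃ v : V, p = rProfile G r A v} \ {fun _ => ⊤}).ncard

set_option linter.unusedSectionVars false

open Set

section IntervalLemmas

variable {V : Type*} [Fintype V] {G : SimpleGraph V} {lo hi : V → ℝ}

open Classical in
noncomputable def iball (G : SimpleGraph V) (a : V) (d : ℕ) : Finset V :=
  Finset.univ.filter (fun u => G.edist a u ≤ d)

lemma mem_iball {a u : V} {d : ℕ} : u ∈ iball G a d ↔ G.edist a u ≤ d := by
  simp [iball]

lemma self_mem_iball {a : V} {d : ℕ} : a ∈ iball G a d := by
  simp [mem_iball]

lemma iball_nonempty {a : V} {d : ℕ} : (iball G a d).Nonempty := ⟨a, self_mem_iball⟩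

lemma iball_mono {a : V} {d d' : ℕ} (h : d ≤ d') : iball G a d ⊆ iball G a d' := by
  intro u hu
  rw [mem_iball] at hu ⊢
  exact hu.trans (by exact_mod_cast h)

noncomputable def Rr (G : SimpleGraph V) (hi : V → ℝ) (a : V) (d : ℕ) : ℝ :=
  (iball G a d).sup' iball_nonempty hi

noncomputable def Lr (G : SimpleGraph V) (lo : V → ℝ) (a : V) (d : ℕ) : ℝ :=
  (iball G a d).inf' iball_nonempty lo

lemma hi_le_Rr {a u : V} {d : ℕ} (h : u ∈ iball G a d) : hi u ≤ Rr G hi a d :=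
  Finset.le_sup' hi h

lemma Lr_le_lo {a u : V} {d : ℕ} (h : u ∈ iball G a d) : Lr G lo a d ≤ lo u :=
  Finset.inf'_le lo h

lemma exists_Rr (a : V) (d : ℕ) : ∃ u ∈ iball G a d, Rr G hi a d = hi u :=
  Finset.exists_mem_eq_sup' iball_nonempty hi

lemma exists_Lr (a : V) (d : ℕ) : ∃ u ∈ iball G a d, Lr G lo a d = lo u :=
  Finset.exists_mem_eq_inf' iball_nonempty lo

lemma Lr_le_Rr {a : V} {d : ℕ} (hint : ∀ v, lo v ≤ hi v) : Lr G lo a d ≤ Rr G hi a d :=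
  le_trans (Lr_le_lo self_mem_iball) (le_trans (hint a) (hi_le_Rr self_mem_iball))

/-- glue two ord-connected sets meeting each other -/
lemma ordConnected_union' {S T : Set ℝ} (hS : S.OrdConnected) (hT : T.OrdConnected)
    (hST : (S ∩ T).Nonempty) : (S ∪ T).OrdConnected := by
  obtain ⟨c, hcS, hcT⟩ := hST
  constructor
  intro x hx y hy z hz
  rcases hx with hx | hx <;> rcases hy with hy | hy
  · exact Or.inl (hS.out hx hy hz)
  · rcases le_total z c with hc | hc
    · exact Or.inl (hS.out hx hcS ⟨hz.1, hc⟩)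
    · exact Or.inr (hT.out hcT hy ⟨hc, hz.2⟩)
  · rcases le_total z c with hc | hc
    · exact Or.inr (hT.out hx hcT ⟨hz.1, hc⟩)
    · exact Or.inl (hS.out hcS hy ⟨hc, hz.2⟩)
  · exact Or.inr (hT.out hx hy hz)

lemma ordConnected_union_finset {S : Set ℝ} (hS : S.OrdConnected) {ι : Type*} [DecidableEq ι]
    (F : Finset ι) (I : ι → Set ℝ) (hI : ∀ i ∈ F, (I i).OrdConnected)
    (hmeet : ∀ i ∈ F, (S ∩ I i).Nonempty) : (S ∪ ⋃ i ∈ F, I i).OrdConnected := by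
  induction F using Finset.induction with
  | empty => simpa using hS
  | @insert j F hj ih =>
    have h1 : (S ∪ ⋃ i ∈ F, I i).OrdConnected :=
      ih (fun i hi => hI i (Finset.mem_insert_of_mem hi))
        (fun i hi => hmeet i (Finset.mem_insert_of_mem hi))
    have h2 : ((S ∪ ⋃ i ∈ F, I i) ∪ I j).OrdConnected := by
      apply ordConnected_union' h1 (hI j (Finset.mem_insert_self _ _))
      obtain ⟨c, hc1, hc2⟩ := hmeet j (Finset.mem_insert_self _ _)
      exact ⟨c, Or.inl hc1, hc2⟩
    have : S ∪ ⋃ i ∈ insert j F, I i = (S ∪ ⋃ i ∈ F, I i) ∪ I j := by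
      ext x; simp only [Set.mem_union, Set.mem_iUnion, Finset.mem_insert, exists_prop]
      constructor
      · rintro (h | ⟨i, (rfl | hi), hx⟩)
        · exact Or.inl (Or.inl h)
        · exact Or.inr hx
        · exact Or.inl (Or.inr ⟨i, hi, hx⟩)
      · rintro ((h | ⟨i, hi, hx⟩) | h)
        · exact Or.inl h
        · exact Or.inr ⟨i, Or.inr hi, hx⟩
        · exact Or.inr ⟨j, Or.inl rfl, h⟩
    rw [this]
    exact h2

def Uset (G : SimpleGraph V) (lo hi : V → ℝ) (a : V) (d : ℕ) : Set ℝ :=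
  ⋃ u ∈ iball G a d, Set.Icc (lo u) (hi u)

lemma mem_Uset {a : V} {d : ℕ} {t : ℝ} :
    t ∈ Uset G lo hi a d ↔ ∃ u ∈ iball G a d, t ∈ Set.Icc (lo u) (hi u) := by
  simp only [Uset, Set.mem_iUnion, Set.mem_Icc, exists_prop]

/-- every vertex at distance `d+1` overlaps some vertex at distance `≤ d` -/
lemma exists_pred (hint : ∀ v, lo v ≤ hi v)
    (hadj : ∀ u v : V, G.Adj u v ↔ u ≠ v ∧ lo u ≤ hi v ∧ lo v ≤ hi u)
    {a u : V} {d : ℕ} (h : u ∈ iball G a (d+1)) :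
    ∃ w ∈ iball G a d, lo w ≤ hi u ∧ lo u ≤ hi w := by
  rw [mem_iball] at h
  by_cases h' : G.edist a u ≤ d
  · exact ⟨u, mem_iball.2 h', hint u, hint u⟩
  · have hne : G.edist a u ≠ ⊤ := by
      intro ht
      rw [ht, top_le_iff] at h
      exact ENat.coe_ne_top _ h
    obtain ⟨p, hp⟩ := exists_walk_of_edist_ne_top hne
    cases hq : p.reverse with
    | nil =>
      exact ⟨_, self_mem_iball, hint _, hint _⟩
    | @cons _ b _ ha qtail =>
      have hlen : (qtail.length : ℕ∞) + 1 = G.edist a u := by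
        have : p.reverse.length = p.length := p.length_reverse
        rw [hq] at this
        simp only [SimpleGraph.Walk.length_cons] at this
        rw [← hp, ← this]
        push_cast; ring
      have hbd : G.edist a b ≤ (d : ℕ∞) := by
        have h1 : G.edist a b ≤ qtail.length := by
          have := qtail.reverse.edist_le
          simpa using this
        have h2 : (qtail.length : ℕ∞) ≤ d := by
          have hcast : ((qtail.length + 1 : ℕ) : ℕ∞) ≤ ((d + 1 : ℕ) : ℕ∞) := by
            push_cast
            rw [hlen]
            exact_mod_cast h
          have := Nat.cast_le.mp hcast
          exact_mod_cast Nat.succ_le_succ_iff.mp this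
        exact h1.trans h2
      obtain ⟨hne', h1, h2⟩ := (hadj u b).1 ha
      exact ⟨b, mem_iball.2 hbd, h2, h1⟩

lemma Uset_ordConnected (hint : ∀ v, lo v ≤ hi v)
    (hadj : ∀ u v : V, G.Adj u v ↔ u ≠ v ∧ lo u ≤ hi v ∧ lo v ≤ hi u)
    (a : V) : ∀ d : ℕ, (Uset G lo hi a d).OrdConnected := by
  intro d
  induction d with
  | zero =>
    have : iball G a 0 = {a} := by
      ext u
      rw [mem_iball, Finset.mem_singleton]
      constructor
      · intro h
        have : G.edist a u = 0 := le_antisymm (by exact_mod_cast h) zero_le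
        exact (SimpleGraph.edist_eq_zero_iff.1 this).symm
      · rintro rfl
        simp
    simp only [Uset, this, Finset.mem_singleton, Set.iUnion_iUnion_eq_left]
    exact Set.ordConnected_Icc
  | succ d ih =>
    classical
    have key : Uset G lo hi a (d+1) = Uset G lo hi a d ∪ ⋃ u ∈ iball G a (d+1), Set.Icc (lo u) (hi u) := by
      apply Set.eq_of_subset_of_subset
      · intro t ht; exact Or.inr ht
      · rintro t (ht | ht)
        · rw [mem_Uset] at ht ⊢
          obtain ⟨u, hu, htu⟩ := ht
          exact ⟨u, iball_mono (Nat.le_succ d) hu, htu⟩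
        · exact ht
    rw [key]
    apply ordConnected_union_finset ih
    · intro u _; exact Set.ordConnected_Icc
    · intro u hu
      obtain ⟨w, hw, h1, h2⟩ := exists_pred hint hadj hu
      refine ⟨max (lo u) (lo w), ?_, ?_⟩
      · rw [mem_Uset]
        exact ⟨w, hw, le_max_right _ _, max_le h2 (hint w)⟩
      · exact ⟨le_max_left _ _, max_le (hint u) h1⟩

lemma Icc_subset_Uset (hint : ∀ v, lo v ≤ hi v)
    (hadj : ∀ u v : V, G.Adj u v ↔ u ≠ v ∧ lo u ≤ hi v ∧ lo v ≤ hi u)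
    (a : V) (d : ℕ) : Set.Icc (Lr G lo a d) (Rr G hi a d) ⊆ Uset G lo hi a d := by
  obtain ⟨uL, huL, hL⟩ := exists_Lr (G := G) (lo := lo) a d
  obtain ⟨uR, huR, hR⟩ := exists_Rr (G := G) (hi := hi) a d
  have hmemL : Lr G lo a d ∈ Uset G lo hi a d := by
    rw [mem_Uset]; exact ⟨uL, huL, le_of_eq hL.symm, hL ▸ hint uL⟩
  have hmemR : Rr G hi a d ∈ Uset G lo hi a d := by
    rw [mem_Uset]; exact ⟨uR, huR, hR ▸ hint uR, le_of_eq hR⟩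
  exact (Uset_ordConnected hint hadj a d).out hmemL hmemR

/-- the key characterization of balls in an interval graph -/
lemma edist_le_iff (hint : ∀ v, lo v ≤ hi v)
    (hadj : ∀ u v : V, G.Adj u v ↔ u ≠ v ∧ lo u ≤ hi v ∧ lo v ≤ hi u)
    (a v : V) (d : ℕ) :
    G.edist a v ≤ ((d+1 : ℕ) : ℕ∞) ↔ lo v ≤ Rr G hi a d ∧ Lr G lo a d ≤ hi v := by
  constructor
  · intro h
    obtain ⟨w, hw, h1, h2⟩ := exists_pred hint hadj (mem_iball.2 (by exact_mod_cast h))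
    exact ⟨h2.trans (hi_le_Rr hw), (Lr_le_lo hw).trans h1⟩
  · rintro ⟨h1, h2⟩
    set t := max (lo v) (Lr G lo a d) with ht
    have htIcc : t ∈ Set.Icc (Lr G lo a d) (Rr G hi a d) :=
      ⟨le_max_right _ _, max_le h1 (Lr_le_Rr hint)⟩
    have htv : t ∈ Set.Icc (lo v) (hi v) := ⟨le_max_left _ _, max_le (hint v) h2⟩
    obtain ⟨u, hu, htu⟩ := mem_Uset.1 (Icc_subset_Uset hint hadj a d htIcc)
    have hdve : G.edist u v ≤ 1 := by
      by_cases huv : u = v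
      · subst huv; simp
      · have : G.Adj u v := (hadj u v).2 ⟨huv, htu.1.trans htv.2, htv.1.trans htu.2⟩
        exact le_of_eq (SimpleGraph.edist_eq_one_iff_adj.2 this)
    calc G.edist a v ≤ G.edist a u + G.edist u v := SimpleGraph.edist_triangle
      _ ≤ (d : ℕ∞) + 1 := add_le_add (mem_iball.1 hu) hdve
      _ = ((d+1 : ℕ) : ℕ∞) := by push_cast; ring

end IntervalLemmas
section Rigidity

variable {V : Type*} [Fintype V] {G : SimpleGraph V} {lo hi : V → ℝ}

lemma walk_union_ordConnected (hint : ∀ v, lo v ≤ hi v)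
    (hadj : ∀ u v : V, G.Adj u v ↔ u ≠ v ∧ lo u ≤ hi v ∧ lo v ≤ hi u) :
    ∀ {x y : V} (q : G.Walk x y),
      (⋃ u ∈ q.support, Set.Icc (lo u) (hi u)).OrdConnected := by
  intro x y q
  induction q with
  | nil => simp [Set.ordConnected_Icc]
  | @cons x b y ha q ih =>
    have hsup : (⋃ u ∈ (SimpleGraph.Walk.cons ha q).support, Set.Icc (lo u) (hi u))
        = Set.Icc (lo x) (hi x) ∪ ⋃ u ∈ q.support, Set.Icc (lo u) (hi u) := by
      rw [SimpleGraph.Walk.support_cons]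
      ext t
      simp only [Set.mem_iUnion, Set.mem_union, List.mem_cons, exists_prop]
      constructor
      · rintro ⟨u, (rfl | hu), htu⟩
        · exact Or.inl htu
        · exact Or.inr ⟨u, hu, htu⟩
      · rintro (h | ⟨u, hu, htu⟩)
        · exact ⟨x, Or.inl rfl, h⟩
        · exact ⟨u, Or.inr hu, htu⟩
    rw [hsup]
    obtain ⟨hne, h1, h2⟩ := (hadj x b).1 ha
    apply ordConnected_union' Set.ordConnected_Icc ih
    refine ⟨max (lo x) (lo b), ⟨le_max_left _ _, max_le (hint x) h2⟩, ?_⟩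
    have : max (lo x) (lo b) ∈ Set.Icc (lo b) (hi b) := ⟨le_max_right _ _, max_le h1 (hint b)⟩
    exact Set.mem_biUnion q.start_mem_support this

/-- rigidity: if `v` lies strictly between `a` and `a'`, then going through `v`
costs at most 2 extra steps -/
lemma rigidity (hG : G.Connected) (hint : ∀ v, lo v ≤ hi v)
    (hadj : ∀ u v : V, G.Adj u v ↔ u ≠ v ∧ lo u ≤ hi v ∧ lo v ≤ hi u)
    {a v a' : V} (h1 : hi a < lo v) (h2 : hi v < lo a') :
    G.edist a v + G.edist v a' ≤ G.edist a a' + 2 := by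
  classical
  obtain ⟨p, hp⟩ := hG.exists_walk_length_eq_edist a a'
  have hUn := walk_union_ordConnected hint hadj p
  have hmema : hi a ∈ ⋃ u ∈ p.support, Set.Icc (lo u) (hi u) :=
    Set.mem_biUnion p.start_mem_support ⟨hint a, le_refl _⟩
  have hmema' : lo a' ∈ ⋃ u ∈ p.support, Set.Icc (lo u) (hi u) :=
    Set.mem_biUnion p.end_mem_support ⟨le_refl _, hint a'⟩
  have hm : lo v ∈ ⋃ u ∈ p.support, Set.Icc (lo u) (hi u) :=
    hUn.out hmema hmema' ⟨h1.le, (hint v).trans h2.le⟩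
  obtain ⟨u, hu, htu⟩ := by
    simpa only [Set.mem_iUnion, exists_prop] using hm
  -- u overlaps v
  have hdu : G.edist u v ≤ 1 := by
    by_cases huv : u = v
    · subst huv; simp
    · exact le_of_eq (SimpleGraph.edist_eq_one_iff_adj.2
        ((hadj u v).2 ⟨huv, htu.1.trans (hint v), le_refl (lo v) |>.trans htu.2⟩))
  have hq := p.take_spec hu
  have hlen : (p.takeUntil u hu).length + (p.dropUntil u hu).length = p.length := by
    have := congrArg SimpleGraph.Walk.length hq
    rwa [SimpleGraph.Walk.length_append] at this
  have e1 : G.edist a u ≤ ((p.takeUntil u hu).length : ℕ∞) := (p.takeUntil u hu).edist_le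
  have e2 : G.edist u a' ≤ ((p.dropUntil u hu).length : ℕ∞) := (p.dropUntil u hu).edist_le
  have t1 : G.edist a v ≤ G.edist a u + 1 :=
    le_trans SimpleGraph.edist_triangle (by exact add_le_add le_rfl hdu)
  have t2 : G.edist v a' ≤ 1 + G.edist u a' := by
    calc G.edist v a' ≤ G.edist v u + G.edist u a' := SimpleGraph.edist_triangle
      _ ≤ 1 + G.edist u a' := by
          refine add_le_add ?_ le_rfl
          rwa [SimpleGraph.edist_comm]
  calc G.edist a v + G.edist v a'
      ≤ (G.edist a u + 1) + (1 + G.edist u a') := add_le_add t1 t2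
    _ = (G.edist a u + G.edist u a') + 2 := by ring
    _ ≤ (((p.takeUntil u hu).length : ℕ∞) + ((p.dropUntil u hu).length : ℕ∞)) + 2 := by
        exact add_le_add (add_le_add e1 e2) le_rfl
    _ = (p.length : ℕ∞) + 2 := by rw [← Nat.cast_add, hlen]
    _ = G.edist a a' + 2 := by rw [hp]

end Rigidity
section StepFunctions

variable {V : Type*} [Fintype V] {G : SimpleGraph V} {lo hi : V → ℝ}

lemma iball_zero {a : V} : iball G a 0 = {a} := by
  ext u
  rw [mem_iball, Finset.mem_singleton]
  constructor
  · intro h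
    have : G.edist a u = 0 := le_antisymm (by exact_mod_cast h) zero_le
    exact (SimpleGraph.edist_eq_zero_iff.1 this).symm
  · rintro rfl; simp

lemma Rr_zero {a : V} : Rr G hi a 0 = hi a := by
  simp [Rr, iball_zero]

lemma Lr_zero {a : V} : Lr G lo a 0 = lo a := by
  simp [Lr, iball_zero]

open Classical in
noncomputable def alphaF (G : SimpleGraph V) (hi : V → ℝ) (r : ℕ) (a : V) (x : ℝ) : ℕ∞ :=
  if x ≤ hi a then 0
  else if h : ∃ d : ℕ, d + 1 ≤ r ∧ x ≤ Rr G hi a d then (((Nat.find h) + 1 : ℕ) : ℕ∞) else ⊤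

open Classical in
noncomputable def betaF (G : SimpleGraph V) (lo : V → ℝ) (r : ℕ) (a : V) (y : ℝ) : ℕ∞ :=
  if lo a ≤ y then 1
  else if h : ∃ d : ℕ, d + 1 ≤ r ∧ Lr G lo a d ≤ y then (((Nat.find h) + 1 : ℕ) : ℕ∞) else ⊤

lemma alphaF_zero_iff {r : ℕ} {a : V} {x : ℝ} : alphaF G hi r a x = 0 ↔ x ≤ hi a := by
  unfold alphaF
  split_ifs with h1 h2
  · simp [h1]
  · simp [h1]
  · simp [h1]

lemma betaF_one_iff {r : ℕ} {a : V} {y : ℝ} : betaF G lo r a y = 1 ↔ lo a ≤ y := by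
  unfold betaF
  split_ifs with h1 h2
  · simp [h1]
  · constructor
    · intro hc
      exfalso
      have h0 : Nat.find h2 ≠ 0 := by
        intro h0
        have := Nat.find_spec h2
        rw [h0] at this
        rw [Lr_zero] at this
        exact h1 this.2
      have : (Nat.find h2) + 1 = 1 := by exact_mod_cast hc
      omega
    · intro h; exact absurd h h1
  · simp [h1]

lemma alphaF_mono {r : ℕ} {a : V} : Monotone (alphaF G hi r a) := by
  intro x x' hxx'
  by_cases hx' : x' ≤ hi a
  · have hx : x ≤ hi a := hxx'.trans hx'
    unfold alphaF
    rw [if_pos hx, if_pos hx']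
  · by_cases hx : x ≤ hi a
    · unfold alphaF
      rw [if_pos hx, if_neg hx']
      exact zero_le
    · unfold alphaF
      rw [if_neg hx, if_neg hx']
      by_cases h2 : ∃ d : ℕ, d + 1 ≤ r ∧ x' ≤ Rr G hi a d
      · obtain ⟨d, hd1, hd2⟩ := h2
        have h3 : ∃ d : ℕ, d + 1 ≤ r ∧ x ≤ Rr G hi a d := ⟨d, hd1, hxx'.trans hd2⟩
        rw [dif_pos h3, dif_pos (⟨d, hd1, hd2⟩ : ∃ d : ℕ, d + 1 ≤ r ∧ x' ≤ Rr G hi a d)]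
        have : Nat.find h3 ≤ Nat.find (⟨d, hd1, hd2⟩ : ∃ d : ℕ, d + 1 ≤ r ∧ x' ≤ Rr G hi a d) :=
          Nat.find_mono fun n hn => ⟨hn.1, hxx'.trans hn.2⟩
        exact_mod_cast Nat.succ_le_succ this
      · rw [dif_neg h2]
        exact le_top

lemma one_le_betaF {r : ℕ} {a : V} {y : ℝ} : 1 ≤ betaF G lo r a y := by
  unfold betaF
  split_ifs with h1 h2
  · exact le_refl 1
  · exact_mod_cast Nat.succ_le_succ (Nat.zero_le _)
  · exact le_top

lemma betaF_anti {r : ℕ} {a : V} : Antitone (betaF G lo r a) := by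
  intro y y' hyy'
  by_cases hy : lo a ≤ y
  · have hy' : lo a ≤ y' := hy.trans hyy'
    unfold betaF
    rw [if_pos hy, if_pos hy']
  · by_cases hy' : lo a ≤ y'
    · have : betaF G lo r a y' = 1 := by unfold betaF; rw [if_pos hy']
      rw [this]
      exact one_le_betaF
    · unfold betaF
      rw [if_neg hy, if_neg hy']
      by_cases h2 : ∃ d : ℕ, d + 1 ≤ r ∧ Lr G lo a d ≤ y
      · obtain ⟨d, hd1, hd2⟩ := h2
        have h3 : ∃ d : ℕ, d + 1 ≤ r ∧ Lr G lo a d ≤ y' := ⟨d, hd1, hd2.trans hyy'⟩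
        rw [dif_pos h3, dif_pos (⟨d, hd1, hd2⟩ : ∃ d : ℕ, d + 1 ≤ r ∧ Lr G lo a d ≤ y)]
        have : Nat.find h3 ≤ Nat.find (⟨d, hd1, hd2⟩ : ∃ d : ℕ, d + 1 ≤ r ∧ Lr G lo a d ≤ y) :=
          Nat.find_mono fun n hn => ⟨hn.1, hn.2.trans hyy'⟩
        exact_mod_cast Nat.succ_le_succ this
      · rw [dif_neg h2]
        exact le_top

/-- value sets -/
def Walpha (r : ℕ) : Finset ℕ∞ :=
  insert 0 (insert ⊤ ((Finset.Icc 2 r).image (fun n : ℕ => (n : ℕ∞))))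

def Wbeta (r : ℕ) : Finset ℕ∞ :=
  insert ⊤ ((Finset.Icc 1 r).image (fun n : ℕ => (n : ℕ∞)))

lemma card_Walpha {r : ℕ} (hr : 1 ≤ r) : (Walpha r).card ≤ r + 1 := by
  apply le_trans (Finset.card_insert_le _ _)
  have := Finset.card_insert_le (⊤ : ℕ∞) ((Finset.Icc 2 r).image (fun n : ℕ => (n : ℕ∞)))
  have h2 : ((Finset.Icc 2 r).image (fun n : ℕ => (n : ℕ∞))).card ≤ r - 1 := by
    apply le_trans Finset.card_image_le
    rw [Nat.card_Icc]
    omega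
  omega

lemma card_Wbeta {r : ℕ} : (Wbeta r).card ≤ r + 1 := by
  apply le_trans (Finset.card_insert_le _ _)
  have h2 : ((Finset.Icc 1 r).image (fun n : ℕ => (n : ℕ∞))).card ≤ r := by
    apply le_trans Finset.card_image_le
    rw [Nat.card_Icc]
    omega
  omega

lemma alphaF_mem {r : ℕ} {a : V} {x : ℝ} : alphaF G hi r a x ∈ Walpha r := by
  unfold alphaF Walpha
  split_ifs with h1 h2
  · exact Finset.mem_insert_self _ _
  · apply Finset.mem_insert_of_mem
    apply Finset.mem_insert_of_mem
    rw [Finset.mem_image]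
    refine ⟨Nat.find h2 + 1, ?_, rfl⟩
    rw [Finset.mem_Icc]
    have hs := Nat.find_spec h2
    have h0 : Nat.find h2 ≠ 0 := by
      intro h0
      have := Nat.find_spec h2
      rw [h0] at this
      rw [Rr_zero] at this
      exact h1 this.2
    omega
  · exact Finset.mem_insert_of_mem (Finset.mem_insert_self _ _)

lemma betaF_mem {r : ℕ} (hr : 1 ≤ r) {a : V} {y : ℝ} : betaF G lo r a y ∈ Wbeta r := by
  unfold betaF Wbeta
  split_ifs with h1 h2
  · apply Finset.mem_insert_of_mem
    rw [Finset.mem_image]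
    exact ⟨1, by rw [Finset.mem_Icc]; omega, by norm_num⟩
  · apply Finset.mem_insert_of_mem
    rw [Finset.mem_image]
    refine ⟨Nat.find h2 + 1, ?_, rfl⟩
    rw [Finset.mem_Icc]
    have hs := Nat.find_spec h2
    omega
  · exact Finset.mem_insert_self _ _

end StepFunctions
section Spec

variable {V : Type*} [Fintype V] {G : SimpleGraph V} {lo hi : V → ℝ}

lemma alphaF_spec (hint : ∀ v, lo v ≤ hi v)
    (hadj : ∀ u v : V, G.Adj u v ↔ u ≠ v ∧ lo u ≤ hi v ∧ lo v ≤ hi u)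
    {r : ℕ} {a v : V} (h : hi a < lo v) :
    alphaF G hi r a (lo v) = if G.edist v a ≤ r then G.edist v a else ⊤ := by
  have hne : a ≠ v := by
    rintro rfl
    exact absurd (hint a) (not_le.2 h)
  have hiff : ∀ d : ℕ, (G.edist a v ≤ ((d+1 : ℕ) : ℕ∞) ↔ lo v ≤ Rr G hi a d) := by
    intro d
    rw [edist_le_iff hint hadj]
    constructor
    · exact fun hh => hh.1
    · intro hh
      refine ⟨hh, ?_⟩
      calc Lr G lo a d ≤ lo a := Lr_le_lo self_mem_iball
        _ ≤ hi a := hint a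
        _ ≤ lo v := h.le
        _ ≤ hi v := hint v
  have hcomm : G.edist v a = G.edist a v := SimpleGraph.edist_comm
  unfold alphaF
  rw [if_neg (not_le.2 h)]
  by_cases h2 : ∃ d : ℕ, d + 1 ≤ r ∧ lo v ≤ Rr G hi a d
  · rw [dif_pos h2]
    set n := Nat.find h2 with hn
    obtain ⟨hn1, hn2⟩ := Nat.find_spec h2
    have hle : G.edist a v ≤ ((n+1 : ℕ) : ℕ∞) := (hiff n).2 hn2
    have hge : ¬ (G.edist a v ≤ (n : ℕ∞)) := by
      intro hc
      have hnetop : G.edist a v ≠ ⊤ := by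
        intro ht; rw [ht, top_le_iff] at hc; exact ENat.coe_ne_top _ hc
      obtain ⟨m, hm⟩ : ∃ m : ℕ, (m : ℕ∞) = G.edist a v :=
        ⟨(G.edist a v).toNat, ENat.coe_toNat hnetop⟩
      have hm0 : m ≠ 0 := by
        intro h0
        rw [h0] at hm
        exact hne (SimpleGraph.edist_eq_zero_iff.1 (by exact_mod_cast hm.symm))
      have hmn : m ≤ n := by rw [← hm] at hc; exact_mod_cast hc
      have hmr : (m - 1) + 1 ≤ r := by omega
      have : lo v ≤ Rr G hi a (m-1) := by
        apply (hiff (m-1)).1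
        rw [← hm]
        have h5 : (m - 1) + 1 = m := by omega
        rw [h5]
      have hfind : Nat.find h2 ≤ m - 1 := by
        apply Nat.find_le
        exact ⟨hmr, this⟩
      omega
    have hEq : G.edist a v = ((n+1 : ℕ) : ℕ∞) := by
      apply le_antisymm hle
      by_contra hc
      push_neg at hc
      have : G.edist a v ≤ (n : ℕ∞) := by
        have := Order.le_of_lt_add_one (by exact_mod_cast hc : G.edist a v < (n : ℕ∞) + 1)
        exact this
      exact hge this
    rw [hcomm, hEq]
    rw [if_pos (by exact_mod_cast Nat.cast_le.2 hn1)]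
  · rw [dif_neg h2]
    rw [hcomm]
    rw [if_neg]
    intro hc
    have hnetop : G.edist a v ≠ ⊤ := by
      intro ht; rw [ht, top_le_iff] at hc; exact ENat.coe_ne_top _ hc
    obtain ⟨m, hm⟩ : ∃ m : ℕ, (m : ℕ∞) = G.edist a v :=
      ⟨(G.edist a v).toNat, ENat.coe_toNat hnetop⟩
    have hm0 : m ≠ 0 := by
      intro h0
      rw [h0] at hm
      exact hne (SimpleGraph.edist_eq_zero_iff.1 (by exact_mod_cast hm.symm))
    have hmr : m ≤ r := by rw [← hm] at hc; exact_mod_cast hc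
    have hx : lo v ≤ Rr G hi a (m-1) := by
      apply (hiff (m-1)).1
      rw [← hm]
      have h5 : (m - 1) + 1 = m := by omega
      rw [h5]
    exact h2 ⟨m-1, by omega, hx⟩

lemma betaF_spec (hint : ∀ v, lo v ≤ hi v)
    (hadj : ∀ u v : V, G.Adj u v ↔ u ≠ v ∧ lo u ≤ hi v ∧ lo v ≤ hi u)
    {r : ℕ} {a v : V} (h : hi v < lo a) :
    betaF G lo r a (hi v) = if G.edist v a ≤ r then G.edist v a else ⊤ := by
  have hne : a ≠ v := by
    rintro rfl
    exact absurd (hint a) (not_le.2 h)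
  have hiff : ∀ d : ℕ, (G.edist a v ≤ ((d+1 : ℕ) : ℕ∞) ↔ Lr G lo a d ≤ hi v) := by
    intro d
    rw [edist_le_iff hint hadj]
    constructor
    · exact fun hh => hh.2
    · intro hh
      refine ⟨?_, hh⟩
      calc lo v ≤ hi v := hint v
        _ ≤ lo a := h.le
        _ ≤ hi a := hint a
        _ ≤ Rr G hi a d := hi_le_Rr self_mem_iball
  have hcomm : G.edist v a = G.edist a v := SimpleGraph.edist_comm
  unfold betaF
  rw [if_neg (not_le.2 h)]
  by_cases h2 : ∃ d : ℕ, d + 1 ≤ r ∧ Lr G lo a d ≤ hi v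
  · rw [dif_pos h2]
    set n := Nat.find h2 with hn
    obtain ⟨hn1, hn2⟩ := Nat.find_spec h2
    have hle : G.edist a v ≤ ((n+1 : ℕ) : ℕ∞) := (hiff n).2 hn2
    have hge : ¬ (G.edist a v ≤ (n : ℕ∞)) := by
      intro hc
      have hnetop : G.edist a v ≠ ⊤ := by
        intro ht; rw [ht, top_le_iff] at hc; exact ENat.coe_ne_top _ hc
      obtain ⟨m, hm⟩ : ∃ m : ℕ, (m : ℕ∞) = G.edist a v :=
        ⟨(G.edist a v).toNat, ENat.coe_toNat hnetop⟩
      have hm0 : m ≠ 0 := by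
        intro h0
        rw [h0] at hm
        exact hne (SimpleGraph.edist_eq_zero_iff.1 (by exact_mod_cast hm.symm))
      have hmn : m ≤ n := by rw [← hm] at hc; exact_mod_cast hc
      have hmr : (m - 1) + 1 ≤ r := by omega
      have hx : Lr G lo a (m-1) ≤ hi v := by
        apply (hiff (m-1)).1
        rw [← hm]
        have h5 : (m - 1) + 1 = m := by omega
        rw [h5]
      have hfind : Nat.find h2 ≤ m - 1 := by
        apply Nat.find_le
        exact ⟨hmr, hx⟩
      omega
    have hEq : G.edist a v = ((n+1 : ℕ) : ℕ∞) := by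
      apply le_antisymm hle
      by_contra hc
      push_neg at hc
      exact hge (Order.le_of_lt_add_one (by exact_mod_cast hc : G.edist a v < (n : ℕ∞) + 1))
    rw [hcomm, hEq]
    rw [if_pos (by exact_mod_cast Nat.cast_le.2 hn1)]
  · rw [dif_neg h2]
    rw [hcomm]
    rw [if_neg]
    intro hc
    have hnetop : G.edist a v ≠ ⊤ := by
      intro ht; rw [ht, top_le_iff] at hc; exact ENat.coe_ne_top _ hc
    obtain ⟨m, hm⟩ : ∃ m : ℕ, (m : ℕ∞) = G.edist a v :=
      ⟨(G.edist a v).toNat, ENat.coe_toNat hnetop⟩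
    have hm0 : m ≠ 0 := by
      intro h0
      rw [h0] at hm
      exact hne (SimpleGraph.edist_eq_zero_iff.1 (by exact_mod_cast hm.symm))
    have hmr : m ≤ r := by rw [← hm] at hc; exact_mod_cast hc
    have hx : Lr G lo a (m-1) ≤ hi v := by
      apply (hiff (m-1)).1
      rw [← hm]
      have h5 : (m - 1) + 1 = m := by omega
      rw [h5]
    exact h2 ⟨m-1, by omega, hx⟩

/-- the profile formula for `v ∉ A` -/
lemma profile_eq (hint : ∀ v, lo v ≤ hi v)
    (hadj : ∀ u v : V, G.Adj u v ↔ u ≠ v ∧ lo u ≤ hi v ∧ lo v ≤ hi u)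
    {r : ℕ} (hr : 1 ≤ r) {A : Set V} {v : V} (hv : v ∉ A) (a : A) :
    rProfile G r A v a = if hi a.1 < lo v then alphaF G hi r a.1 (lo v)
      else betaF G lo r a.1 (hi v) := by
  by_cases h1 : hi a.1 < lo v
  · rw [if_pos h1, alphaF_spec hint hadj h1]
    unfold rProfile
    rfl
  · rw [if_neg h1]
    push_neg at h1
    by_cases h2 : hi v < lo a.1
    · rw [betaF_spec hint hadj h2]
      unfold rProfile
      rfl
    · push_neg at h2
      have hne : v ≠ a.1 := fun hh => hv (hh ▸ a.2)
      have hadj' : G.Adj v a.1 := (hadj v a.1).2 ⟨hne, h1, h2⟩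
      have hd : G.edist v a.1 = 1 := SimpleGraph.edist_eq_one_iff_adj.2 hadj'
      have : rProfile G r A v a = 1 := by
        unfold rProfile
        rw [hd, if_pos (by exact_mod_cast hr)]
      rw [this, betaF_one_iff.2 h2]

end Spec
section Counting

/-- counting values of a componentwise-monotone function -/
lemma chain_count {ι : Type*} [Fintype ι] (f : ℝ → ι → ℕ∞)
    (hf : ∀ i, Monotone (fun x => f x i)) (S : Set ℝ) (W : ι → Finset ℕ∞)
    (hW : ∀ x ∈ S, ∀ i, f x i ∈ W i) :
    (f '' S).ncard ≤ 1 + ∑ i, ((W i).card - 1) := by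
  classical
  set N := ∑ i, ((W i).card - 1) with hN
  set μ : (ι → ℕ∞) → ℕ := fun g => ∑ i, ((W i).filter (fun t => t < g i)).card with hμ
  have hbound : ∀ x ∈ S, μ (f x) ≤ N := by
    intro x hx
    apply Finset.sum_le_sum
    intro i _
    have hmem := hW x hx i
    have hsub : (W i).filter (fun t => t < f x i) ⊆ (W i).erase (f x i) := by
      intro t ht
      rw [Finset.mem_filter] at ht
      exact Finset.mem_erase.2 ⟨ne_of_lt ht.2, ht.1⟩
    calc ((W i).filter (fun t => t < f x i)).card
        ≤ ((W i).erase (f x i)).card := Finset.card_le_card hsub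
      _ = (W i).card - 1 := Finset.card_erase_of_mem hmem
  have haux : ∀ x ∈ S, ∀ x' ∈ S, x ≤ x' → μ (f x) = μ (f x') → f x = f x' := by
    intro x hx x' hx' hle hμeq
    by_contra hne
    have hptle : ∀ i, f x i ≤ f x' i := fun i => hf i hle
    have hex : ∃ i, f x i < f x' i := by
      by_contra hno
      push_neg at hno
      exact hne (funext fun i => le_antisymm (hptle i) (hno i))
    obtain ⟨i0, hi0⟩ := hex
    have hlt : μ (f x) < μ (f x') := by
      apply Finset.sum_lt_sum
      · intro i _
        apply Finset.card_le_card
        intro t ht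
        rw [Finset.mem_filter] at ht ⊢
        exact ⟨ht.1, lt_of_lt_of_le ht.2 (hptle i)⟩
      · refine ⟨i0, Finset.mem_univ _, ?_⟩
        have hsubset : (W i0).filter (fun t => t < f x i0)
            ⊆ (W i0).filter (fun t => t < f x' i0) := by
          intro t ht
          rw [Finset.mem_filter] at ht ⊢
          exact ⟨ht.1, lt_of_lt_of_le ht.2 (hptle i0)⟩
        have hmem' : f x i0 ∈ (W i0).filter (fun t => t < f x' i0) :=
          Finset.mem_filter.2 ⟨hW x hx i0, hi0⟩
        have hnot : f x i0 ∉ (W i0).filter (fun t => t < f x i0) := by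
          simp [Finset.mem_filter]
        exact Finset.card_lt_card ((Finset.ssubset_iff_of_subset hsubset).2
          ⟨f x i0, hmem', hnot⟩)
    omega
  have hinj : Set.InjOn μ (f '' S) := by
    rintro g ⟨x, hx, rfl⟩ g' ⟨x', hx', rfl⟩ hμeq
    rcases le_total x x' with h | h
    · exact haux x hx x' hx' h hμeq
    · exact (haux x' hx' x hx h hμeq.symm).symm
  calc (f '' S).ncard = (μ '' (f '' S)).ncard := (Set.ncard_image_of_injOn hinj).symm
    _ ≤ ((Finset.range (N+1) : Finset ℕ) : Set ℕ).ncard := by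
        apply Set.ncard_le_ncard
        · rintro _ ⟨g, ⟨x, hx, rfl⟩, rfl⟩
          simp only [Finset.coe_range, Set.mem_Iio, Nat.lt_succ_iff]
          exact hbound x hx
        · exact (Finset.range (N+1)).finite_toSet
    _ = N + 1 := by rw [Set.ncard_coe_finset, Finset.card_range]
    _ = 1 + N := by omega

/-- fiber counting -/
lemma set_ncard_le_mul {α β γ : Type*} (P : Set α) (hfin : P.Finite)
    (f : α → β) (g : α → γ) (n m : ℕ)
    (hn : (f '' P).ncard ≤ n)
    (hm : ∀ b, (g '' {p ∈ P | f p = b}).ncard ≤ m)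
    (hinj : ∀ p ∈ P, ∀ q ∈ P, f p = f q → g p = g q → p = q) :
    P.ncard ≤ n * m := by
  classical
  have hPF : ↑hfin.toFinset = P := hfin.coe_toFinset
  set PF := hfin.toFinset with hPFdef
  have hcard : P.ncard = PF.card := by rw [← hPF, Set.ncard_coe_finset]
  rw [hcard]
  have hsub : PF ⊆ (PF.image f).biUnion (fun b => PF.filter (fun p => f p = b)) := by
    intro p hp
    rw [Finset.mem_biUnion]
    exact ⟨f p, Finset.mem_image_of_mem f hp, Finset.mem_filter.2 ⟨hp, rfl⟩⟩
  calc PF.card ≤ ((PF.image f).biUnion (fun b => PF.filter (fun p => f p = b))).card :=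
        Finset.card_le_card hsub
    _ ≤ ∑ b ∈ PF.image f, (PF.filter (fun p => f p = b)).card := Finset.card_biUnion_le
    _ ≤ ∑ _b ∈ PF.image f, m := by
        apply Finset.sum_le_sum
        intro b _
        have hinj' : Set.InjOn g ↑(PF.filter (fun p => f p = b)) := by
          intro p hp q hq hgpq
          rw [Finset.mem_coe, Finset.mem_filter] at hp hq
          have hp' : p ∈ P := by rw [← hPF]; exact hp.1
          have hq' : q ∈ P := by rw [← hPF]; exact hq.1
          exact hinj p hp' q hq' (hp.2.trans hq.2.symm) hgpq
        have heq : (PF.filter (fun p => f p = b)).card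
            = (g '' ↑(PF.filter (fun p => f p = b))).ncard := by
          rw [Set.ncard_image_of_injOn hinj', Set.ncard_coe_finset]
        rw [heq]
        apply le_trans _ (hm b)
        apply Set.ncard_le_ncard
        · apply Set.image_mono
          intro p hp
          rw [Finset.mem_coe, Finset.mem_filter] at hp
          exact ⟨by rw [← hPF]; exact hp.1, hp.2⟩
        · exact ((hfin.subset (Set.sep_subset _ _)).image g)
    _ ≤ n * m := by
        have h1 : (PF.image f).card ≤ n := by
          have h2 : ↑(PF.image f) = f '' P := by rw [Finset.coe_image, hPF]
          have h3 : (PF.image f).card = (f '' P).ncard := by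
            rw [← Set.ncard_coe_finset, h2]
          omega
        rw [Finset.sum_const, smul_eq_mul]
        exact Nat.mul_le_mul h1 (le_refl m)

end Counting
theorem profCount_interval_graph {V : Type*} [Fintype V] (G : SimpleGraph V)
    (hG : G.Connected) (lo hi : V → ℝ) (hint : ∀ v, lo v ≤ hi v)
    (hadj : ∀ u v : V, G.Adj u v ↔ u ≠ v ∧ lo u ≤ hi v ∧ lo v ≤ hi u)
    (r k : ℕ) (hr : 1 ≤ r) (A : Set V) (hA : A.ncard = k) :
    profCount G r A ≤ 4 * k ^ 2 * r + 8 * k ^ 2 + 2 * k * r + 7 * k + 1 := by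
  classical
  by_cases hk : k = 0
  · -- degenerate case: A = ∅
    subst hk
    have hAfin : A.Finite := A.toFinite
    have hA0 : A = ∅ := (Set.ncard_eq_zero hAfin).1 hA
    subst hA0
    have hempty : ({p : ((∅ : Set V)) → ℕ∞ | ∃ v : V, p = rProfile G r ∅ v}
        \ {fun _ => ⊤}) = ∅ := by
      rw [Set.eq_empty_iff_forall_notMem]
      rintro p ⟨hp, hne⟩
      apply hne
      rw [Set.mem_singleton_iff]
      obtain ⟨v, rfl⟩ := hp
      funext a
      exact (Set.notMem_empty _ a.2).elim
    unfold profCount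
    rw [hempty, Set.ncard_empty]
    omega
  · have hk1 : 1 ≤ k := Nat.one_le_iff_ne_zero.2 hk
    have hAfin : A.Finite := A.toFinite
    haveI : Fintype ↥A := hAfin.fintype
    have hcardA : Fintype.card ↥A = k := by
      rw [← Nat.card_eq_fintype_card, Nat.card_coe_set_eq, hA]
    have hV : Nonempty V := hG.nonempty
    set P : Set (↥A → ℕ∞) := {p | ∃ v : V, p = rProfile G r A v} \ {fun _ => ⊤} with hP
    have hProf : profCount G r A = P.ncard := rfl
    have hPfin : P.Finite := by
      apply Set.Finite.subset (Set.finite_range (rProfile G r A))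
      intro p hp
      obtain ⟨v, hv⟩ := hp.1
      exact ⟨v, hv.symm⟩
    set vv : (↥A → ℕ∞) → V :=
      fun p => if h : ∃ v : V, p = rProfile G r A v then h.choose else Classical.choice hV
      with hvv
    set wv : (↥A → ℕ∞) → V :=
      fun p => if h : ∃ v : V, v ∉ A ∧ p = rProfile G r A v then h.choose
        else Classical.choice hV with hwv
    set PA : Set (↥A → ℕ∞) := {p ∈ P | ∀ v : V, p = rProfile G r A v → v ∈ A} with hPAdef
    set PB : Set (↥A → ℕ∞) := {p ∈ P | ∃ v : V, v ∉ A ∧ p = rProfile G r A v} with hPBdef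
    have hsplit : P ⊆ PA ∪ PB := by
      intro p hp
      by_cases hc : ∀ v : V, p = rProfile G r A v → v ∈ A
      · exact Or.inl ⟨hp, hc⟩
      · push_neg at hc
        obtain ⟨v, hv1, hv2⟩ := hc
        exact Or.inr ⟨hp, v, hv2, hv1⟩
    -- count PA
    have hPAcard : PA.ncard ≤ k := by
      have hinjA : Set.InjOn vv PA := by
        intro p hp q hq heq
        have hp' : ∃ v : V, p = rProfile G r A v := hp.1.1
        have hq' : ∃ v : V, q = rProfile G r A v := hq.1.1
        have hpv : p = rProfile G r A (vv p) := by
          rw [hvv]; simp only [dif_pos hp']; exact hp'.choose_spec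
        have hqv : q = rProfile G r A (vv q) := by
          rw [hvv]; simp only [dif_pos hq']; exact hq'.choose_spec
        rw [hpv, hqv, heq]
      have himg : vv '' PA ⊆ A := by
        rintro _ ⟨p, hp, rfl⟩
        have hp' : ∃ v : V, p = rProfile G r A v := hp.1.1
        have hpv : p = rProfile G r A (vv p) := by
          rw [hvv]; simp only [dif_pos hp']; exact hp'.choose_spec
        exact hp.2 (vv p) hpv
      calc PA.ncard = (vv '' PA).ncard := (Set.ncard_image_of_injOn hinjA).symm
        _ ≤ A.ncard := Set.ncard_le_ncard himg hAfin
        _ = k := hA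
    -- realizers for PB
    have hwspec : ∀ p ∈ PB, wv p ∉ A ∧ p = rProfile G r A (wv p) := by
      intro p hp
      have hp' : ∃ v : V, v ∉ A ∧ p = rProfile G r A v := hp.2
      rw [hwv]
      simp only [dif_pos hp']
      exact hp'.choose_spec
    set X : (↥A → ℕ∞) → (↥A → ℕ∞) := fun p a => alphaF G hi r a.1 (lo (wv p)) with hX
    set Y : (↥A → ℕ∞) → (↥A → ℕ∞) := fun p a => betaF G lo r a.1 (hi (wv p)) with hY
    have hrecon : ∀ p ∈ PB, ∀ a : ↥A, p a = if X p a = 0 then Y p a else X p a := by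
      intro p hp a
      obtain ⟨hv1, hv2⟩ := hwspec p hp
      conv_lhs => rw [hv2]
      rw [profile_eq hint hadj hr hv1 a]
      by_cases hc : hi a.1 < lo (wv p)
      · rw [if_pos hc]
        have hne0 : X p a ≠ 0 := by
          simp only [hX]
          rw [Ne, alphaF_zero_iff]
          exact not_le.2 hc
        rw [if_neg hne0]
      · rw [if_neg hc]
        push_neg at hc
        have h0 : X p a = 0 := by simp only [hX]; exact alphaF_zero_iff.2 hc
        rw [if_pos h0]
    have hinjB : ∀ p ∈ PB, ∀ q ∈ PB, X p = X q → Y p = Y q → p = q := by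
      intro p hp q hq hXpq hYpq
      funext a
      rw [hrecon p hp a, hrecon q hq a, hXpq, hYpq]
    -- split PB
    set P1 : Set (↥A → ℕ∞) := {p ∈ PB | ∃ a : ↥A, X p a ≠ 0 ∧ X p a ≠ ⊤} with hP1def
    set P2 : Set (↥A → ℕ∞) := {p ∈ PB | (∀ a : ↥A, X p a = 0 ∨ X p a = ⊤)
      ∧ ∃ a : ↥A, Y p a ≠ 1 ∧ Y p a ≠ ⊤} with hP2def
    set P3 : Set (↥A → ℕ∞) := {p ∈ PB | (∀ a : ↥A, X p a = 0 ∨ X p a = ⊤)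
      ∧ ∀ a : ↥A, Y p a = 1 ∨ Y p a = ⊤} with hP3def
    have hsplitB : PB ⊆ P1 ∪ P2 ∪ P3 := by
      intro p hp
      by_cases h1 : ∃ a : ↥A, X p a ≠ 0 ∧ X p a ≠ ⊤
      · exact Or.inl (Or.inl ⟨hp, h1⟩)
      · push_neg at h1
        have h1' : ∀ a, X p a = 0 ∨ X p a = ⊤ := by
          intro a
          by_cases hz : X p a = 0
          · exact Or.inl hz
          · exact Or.inr (h1 a hz)
        by_cases h2 : ∃ a : ↥A, Y p a ≠ 1 ∧ Y p a ≠ ⊤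
        · exact Or.inl (Or.inr ⟨hp, h1', h2⟩)
        · push_neg at h2
          have h2' : ∀ a, Y p a = 1 ∨ Y p a = ⊤ := by
            intro a
            by_cases hz : Y p a = 1
            · exact Or.inl hz
            · exact Or.inr (h2 a hz)
          exact Or.inr ⟨hp, h1', h2'⟩
    -- image counting helpers
    have hXimg : ∀ (T : Set (↥A → ℕ∞)) (W : ↥A → Finset ℕ∞) (c : ℕ),
        (∀ p ∈ T, ∀ a, X p a ∈ W a) → (∀ a, (W a).card - 1 ≤ c) →
        (X '' T).ncard ≤ 1 + k * c := by
      intro T W c hWT hWc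
      have hsum : (∑ a : ↥A, ((W a).card - 1)) ≤ k * c := by
        calc (∑ a : ↥A, ((W a).card - 1)) ≤ ∑ _a : ↥A, c :=
              Finset.sum_le_sum (fun a _ => hWc a)
          _ = k * c := by rw [Finset.sum_const, Finset.card_univ, hcardA, smul_eq_mul]
      refine le_trans ?_ (add_le_add (le_refl 1) hsum)
      have hXcomp : X '' T
          = (fun x => fun a : ↥A => alphaF G hi r a.1 x) '' ((fun p => lo (wv p)) '' T) := by
        rw [← Set.image_comp]
        apply Set.image_congr
        intro p _
        simp only [hX, Function.comp]
      rw [hXcomp]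
      apply chain_count
      · intro a
        exact fun x x' h => alphaF_mono h
      · rintro x ⟨p, hp, rfl⟩ a
        have := hWT p hp a
        simpa only [hX] using this
    have hYimg : ∀ (T : Set (↥A → ℕ∞)) (W : ↥A → Finset ℕ∞) (c : ℕ),
        (∀ p ∈ T, ∀ a, Y p a ∈ W a) → (∀ a, (W a).card - 1 ≤ c) →
        (Y '' T).ncard ≤ 1 + k * c := by
      intro T W c hWT hWc
      have hsum : (∑ a : ↥A, ((W a).card - 1)) ≤ k * c := by
        calc (∑ a : ↥A, ((W a).card - 1)) ≤ ∑ _a : ↥A, c :=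
              Finset.sum_le_sum (fun a _ => hWc a)
          _ = k * c := by rw [Finset.sum_const, Finset.card_univ, hcardA, smul_eq_mul]
      refine le_trans ?_ (add_le_add (le_refl 1) hsum)
      have hYcomp : Y '' T
          = (fun x => fun a : ↥A => betaF G lo r a.1 (-x)) '' ((fun p => -(hi (wv p))) '' T) := by
        rw [← Set.image_comp]
        apply Set.image_congr
        intro p _
        simp only [hY, Function.comp, neg_neg]
      rw [hYcomp]
      apply chain_count
      · intro a
        exact fun x x' h => betaF_anti (neg_le_neg h)
      · rintro x ⟨p, hp, rfl⟩ a
        have := hWT p hp a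
        simpa only [hY, neg_neg] using this
    have hsum_const : ∀ c : ℕ, (∑ _a : ↥A, c) = k * c := by
      intro c
      rw [Finset.sum_const, Finset.card_univ, hcardA, smul_eq_mul]
    -- count P1
    have hP1card : P1.ncard ≤ (k*r+1) * (3*k+1) := by
      apply set_ncard_le_mul P1 (hPfin.subset (fun p hp => hp.1.1)) X Y
      · -- X-image bound
        have hb := hXimg P1 (fun _ => Walpha r) r (fun p _ a => by
          simp only [hX]; exact alphaF_mem)
          (fun a => by show (Walpha r).card - 1 ≤ r; have := card_Walpha hr; omega)
        omega
      · -- fibers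
        intro b
        by_cases hb : ({p ∈ P1 | X p = b}).Nonempty
        · obtain ⟨p0, hp00⟩ := hb
          obtain ⟨a0, ha0⟩ := hp00.1.2
          have hba0 : b a0 ≠ 0 ∧ b a0 ≠ ⊤ := by rw [← hp00.2]; exact ha0
          set δ : ℕ := (b a0).toNat with hδ
          set W : ↥A → Finset ℕ∞ := fun a => insert 1
            ((Finset.Icc ((G.edist a0.1 a.1).toNat) ((G.edist a0.1 a.1).toNat + 2)).image
              (fun t => if (t - δ : ℕ) ≤ r then (((t - δ : ℕ)) : ℕ∞) else ⊤)) with hWdef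
          have hWapp : ∀ p ∈ {p ∈ P1 | X p = b}, ∀ a, Y p a ∈ W a := by
            intro p hp a
            have hpPB : p ∈ PB := hp.1.1
            have hXb : X p = b := hp.2
            obtain ⟨hwA, hwp⟩ := hwspec p hpPB
            have hXa0 : alphaF G hi r a0.1 (lo (wv p)) = b a0 := by
              have := congrFun hXb a0
              simpa only [hX] using this
            have h0 : hi a0.1 < lo (wv p) := by
              by_contra hc
              push_neg at hc
              exact hba0.1 (by rw [← hXa0]; exact alphaF_zero_iff.2 hc)
            have hspec0 : alphaF G hi r a0.1 (lo (wv p))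
                = if G.edist (wv p) a0.1 ≤ r then G.edist (wv p) a0.1 else ⊤ :=
              alphaF_spec hint hadj h0
            have hdle : G.edist (wv p) a0.1 = b a0 := by
              by_cases hcc : G.edist (wv p) a0.1 ≤ r
              · rw [← hXa0, hspec0, if_pos hcc]
              · exact absurd (by rw [← hXa0, hspec0, if_neg hcc]) hba0.2
            by_cases hca : lo a.1 ≤ hi (wv p)
            · have hY1 : Y p a = 1 := by
                simp only [hY]; exact betaF_one_iff.2 hca
              rw [hY1, hWdef]
              exact Finset.mem_insert_self _ _
            · push_neg at hca
              have hspeca : betaF G lo r a.1 (hi (wv p))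
                  = if G.edist (wv p) a.1 ≤ r then G.edist (wv p) a.1 else ⊤ :=
                betaF_spec hint hadj hca
              have hrig := rigidity hG hint hadj h0 hca
              have htri : G.edist a0.1 a.1 ≤ G.edist a0.1 (wv p) + G.edist (wv p) a.1 :=
                SimpleGraph.edist_triangle
              have hDne : G.edist a0.1 a.1 ≠ ⊤ := by
                rw [SimpleGraph.edist_ne_top_iff_reachable]; exact hG a0.1 a.1
              have hEne : G.edist (wv p) a.1 ≠ ⊤ := by
                rw [SimpleGraph.edist_ne_top_iff_reachable]; exact hG (wv p) a.1
              have hδv : G.edist (wv p) a0.1 = (δ : ℕ∞) := by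
                rw [hdle, hδ, ENat.coe_toNat hba0.2]
              have hDcast : G.edist a0.1 a.1 = (((G.edist a0.1 a.1).toNat : ℕ) : ℕ∞) :=
                (ENat.coe_toNat hDne).symm
              have hEcast : G.edist (wv p) a.1 = (((G.edist (wv p) a.1).toNat : ℕ) : ℕ∞) :=
                (ENat.coe_toNat hEne).symm
              have hcomm0 : G.edist a0.1 (wv p) = G.edist (wv p) a0.1 :=
                SimpleGraph.edist_comm
              have h1 : δ + (G.edist (wv p) a.1).toNat ≤ (G.edist a0.1 a.1).toNat + 2 := by
                have h1' := hrig
                rw [hcomm0, hδv] at h1'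
                conv_lhs at h1' => rw [hEcast]
                conv_rhs at h1' => rw [hDcast]
                exact_mod_cast h1'
              have h2 : (G.edist a0.1 a.1).toNat ≤ δ + (G.edist (wv p) a.1).toNat := by
                have h2' := htri
                rw [hcomm0, hδv] at h2'
                conv_lhs at h2' => rw [hDcast]
                conv_rhs at h2' => rw [hEcast]
                exact_mod_cast h2'
              have hYval : Y p a = if (G.edist (wv p) a.1).toNat ≤ r
                  then (((G.edist (wv p) a.1).toNat : ℕ) : ℕ∞) else ⊤ := by
                simp only [hY]
                rw [hspeca]
                by_cases hEr : (G.edist (wv p) a.1).toNat ≤ r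
                · rw [if_pos hEr, if_pos (by rw [hEcast]; exact_mod_cast hEr), ← hEcast]
                · rw [if_neg hEr, if_neg (by
                    intro hc
                    apply hEr
                    rw [hEcast] at hc
                    exact_mod_cast hc)]
              rw [hYval, hWdef]
              apply Finset.mem_insert_of_mem
              rw [Finset.mem_image]
              refine ⟨δ + (G.edist (wv p) a.1).toNat, ?_, ?_⟩
              · rw [Finset.mem_Icc]
                exact ⟨h2, h1⟩
              · have hsub : δ + (G.edist (wv p) a.1).toNat - δ = (G.edist (wv p) a.1).toNat := by
                  omega
                rw [hsub]
          have hbnd := hYimg {p ∈ P1 | X p = b} W 3 hWapp (by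
            intro a
            have hc1 : (W a).card ≤ 4 := by
              rw [hWdef]
              apply le_trans (Finset.card_insert_le _ _)
              have := Finset.card_image_le (f := fun t => if (t - δ : ℕ) ≤ r
                then (((t - δ : ℕ)) : ℕ∞) else ⊤)
                (s := Finset.Icc ((G.edist a0.1 a.1).toNat) ((G.edist a0.1 a.1).toNat + 2))
              rw [Nat.card_Icc] at this
              omega
            omega)
          omega
        · rw [Set.not_nonempty_iff_eq_empty] at hb
          rw [hb, Set.image_empty, Set.ncard_empty]
          omega
      · intro p hp q hq h1 h2
        exact hinjB p hp.1 q hq.1 h1 h2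
    -- count P2
    have hP2card : P2.ncard ≤ (k*r+1) * (k+1) := by
      apply set_ncard_le_mul P2 (hPfin.subset (fun p hp => hp.1.1)) Y X
      · have hb := hYimg P2 (fun _ => Wbeta r) r (fun p _ a => by
          simp only [hY]; exact betaF_mem hr)
          (fun a => by show (Wbeta r).card - 1 ≤ r; have := card_Wbeta (r := r); omega)
        omega
      · intro b
        have hbnd := hXimg {p ∈ P2 | Y p = b} (fun _ => ({0, ⊤} : Finset ℕ∞)) 1 (by
          intro p hp a
          have := hp.1.2.1 a
          rcases this with h | h <;> simp [h])
          (fun a => by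
            show ({0, ⊤} : Finset ℕ∞).card - 1 ≤ 1
            have : ({0, ⊤} : Finset ℕ∞).card ≤ 2 := by
              apply le_trans (Finset.card_insert_le _ _)
              simp
            omega)
        omega
      · intro p hp q hq h1 h2
        exact hinjB p hp.1 q hq.1 h2 h1
    -- count P3
    have hP3card : P3.ncard ≤ (k+1) * (k+1) := by
      apply set_ncard_le_mul P3 (hPfin.subset (fun p hp => hp.1.1)) X Y
      · have hb := hXimg P3 (fun _ => ({0, ⊤} : Finset ℕ∞)) 1 (by
          intro p hp a
          rcases hp.2.1 a with h | h <;> simp [h])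
          (fun a => by
            show ({0, ⊤} : Finset ℕ∞).card - 1 ≤ 1
            have : ({0, ⊤} : Finset ℕ∞).card ≤ 2 := by
              apply le_trans (Finset.card_insert_le _ _)
              simp
            omega)
        omega
      · intro b
        have hbnd := hYimg {p ∈ P3 | X p = b} (fun _ => ({1, ⊤} : Finset ℕ∞)) 1 (by
          intro p hp a
          rcases hp.1.2.2 a with h | h <;> simp [h])
          (fun a => by
            show ({1, ⊤} : Finset ℕ∞).card - 1 ≤ 1
            have : ({1, ⊤} : Finset ℕ∞).card ≤ 2 := by
              apply le_trans (Finset.card_insert_le _ _)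
              simp
            omega)
        omega
      · intro p hp q hq h1 h2
        exact hinjB p hp.1 q hq.1 h1 h2
    -- assemble
    have hPBcard : PB.ncard ≤ P1.ncard + P2.ncard + P3.ncard := by
      calc PB.ncard ≤ (P1 ∪ P2 ∪ P3).ncard :=
            Set.ncard_le_ncard hsplitB (((hPfin.subset (fun p hp => hp.1.1)).union
              (hPfin.subset (fun p hp => hp.1.1))).union (hPfin.subset (fun p hp => hp.1.1)))
        _ ≤ (P1 ∪ P2).ncard + P3.ncard := Set.ncard_union_le _ _
        _ ≤ P1.ncard + P2.ncard + P3.ncard := by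
            have := Set.ncard_union_le P1 P2
            omega
    have hfinal : P.ncard ≤ k + ((k*r+1) * (3*k+1) + (k*r+1) * (k+1) + (k+1) * (k+1)) := by
      calc P.ncard ≤ (PA ∪ PB).ncard := Set.ncard_le_ncard hsplit
            ((hPfin.subset (fun p hp => hp.1)).union (hPfin.subset (fun p hp => hp.1)))
        _ ≤ PA.ncard + PB.ncard := Set.ncard_union_le _ _
        _ ≤ k + (P1.ncard + P2.ncard + P3.ncard) := by omega
        _ ≤ k + ((k*r+1) * (3*k+1) + (k*r+1) * (k+1) + (k+1) * (k+1)) := by omega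
    rw [hProf]
    have hexp : k + ((k*r+1) * (3*k+1) + (k*r+1) * (k+1) + (k+1) * (k+1))
        ≤ 4 * k ^ 2 * r + 8 * k ^ 2 + 2 * k * r + 7 * k + 1 := by
      nlinarith [hk1, sq_nonneg k, Nat.one_le_iff_ne_zero.2 hk]
    omega
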